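/- Let n ≥ 2 be an integer and let f = x^n·z − y² − y ∈ ℂ[x,y,z] (a Danielewski surface polynomial). Then f is a factorially closed polynomial, i.e., for all nonzero g, h ∈ ℂ[x,y,z], gh ∈ ℂ[f] implies g ∈ ℂ[f] and h ∈ ℂ[f]. -/

import Mathlib

open MvPolynomial

private lemma linear_irred {R : Type*} [CommRing R] [IsDomain R] {A B : R}
    (hA : A ≠ 0) (hcop : ∀ d : R, d ∣ A → d ∣ B → IsUnit d) :
    Irreducible (Polynomial.C A * Polynomial.X - Polynomial.C B) := by
  set T : Polynomial R := Polynomial.C A * Polynomial.X - Polynomial.C B with hTdef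
  have hdeg : T.natDegree = 1 := by
    rw [hTdef, sub_eq_add_neg, ← Polynomial.C_neg]
    exact Polynomial.natDegree_linear hA
  have hc1 : T.coeff 1 = A := by simp [hTdef]
  have hc0 : T.coeff 0 = -B := by simp [hTdef]
  have key : ∀ d : R, ∀ w : Polynomial R, T = Polynomial.C d * w → IsUnit d := by
    intro d w hw
    refine hcop d ⟨w.coeff 1, ?_⟩ (dvd_neg.mp ⟨w.coeff 0, ?_⟩)
    · rw [← hc1, hw, Polynomial.coeff_C_mul]
    · rw [← hc0, hw, Polynomial.coeff_C_mul]
  constructor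
  · intro hu
    have := Polynomial.natDegree_eq_zero_of_isUnit hu
    omega
  · intro u v huv
    have hT0 : T ≠ 0 := fun h => by rw [h] at hdeg; simp at hdeg
    have hu0 : u ≠ 0 := fun h => hT0 (by rw [huv, h, zero_mul])
    have hv0 : v ≠ 0 := fun h => hT0 (by rw [huv, h, mul_zero])
    have hsum : u.natDegree + v.natDegree = 1 := by
      rw [← Polynomial.natDegree_mul hu0 hv0, ← huv, hdeg]
    rcases Nat.eq_zero_or_pos u.natDegree with h0 | hpos
    · left
      rw [Polynomial.eq_C_of_natDegree_eq_zero h0] at huv ⊢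
      exact Polynomial.isUnit_C.mpr (key _ v huv)
    · right
      have h0 : v.natDegree = 0 := by omega
      rw [Polynomial.eq_C_of_natDegree_eq_zero h0] at huv ⊢
      exact Polynomial.isUnit_C.mpr (key _ u (by rw [huv, mul_comm]))

private lemma mv_isUnit_eq_C {F : Type*} [Field F] :
    ∀ (m : ℕ) (g : MvPolynomial (Fin m) F), IsUnit g → ∃ c : F, g = MvPolynomial.C c := by
  intro m
  induction m with
  | zero =>
    intro g _
    obtain ⟨c, rfl⟩ := MvPolynomial.C_surjective (Fin 0) g
    exact ⟨c, rfl⟩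
  | succ m ih =>
    intro g hg
    have hg' : IsUnit (finSuccEquiv F m g) := hg.map _
    obtain ⟨r, hr, hCr⟩ := Polynomial.isUnit_iff.mp hg'
    obtain ⟨c, rfl⟩ := ih r hr
    refine ⟨c, (finSuccEquiv F m).injective ?_⟩
    rw [← hCr]
    simp [finSuccEquiv_apply]

private lemma prime_X1 : Prime (X 1 : MvPolynomial (Fin 2) ℂ) := by
  have hX0 : Prime (X 0 : MvPolynomial (Fin 1) ℂ) := by
    rw [← MulEquiv.prime_iff (finSuccEquiv ℂ 0).toMulEquiv]
    show Prime (finSuccEquiv ℂ 0 (X 0))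
    rw [finSuccEquiv_X_zero]
    exact Polynomial.prime_X
  have h1 : (X 1 : MvPolynomial (Fin 2) ℂ) = X (Fin.succ 0) := rfl
  rw [h1, ← MulEquiv.prime_iff (finSuccEquiv ℂ 1).toMulEquiv]
  show Prime (finSuccEquiv ℂ 1 (X (Fin.succ 0)))
  rw [finSuccEquiv_X_succ]
  exact Polynomial.prime_C_iff.mpr hX0

-- irreducibility of f - C c
set_option synthInstance.maxHeartbeats 1000000 in
set_option maxHeartbeats 1000000 in
private lemma fc_prime (n : ℕ) (c : ℂ) :
    Prime ((X 0 ^ n * X 2 - X 1 ^ 2 - X 1 : MvPolynomial (Fin 3) ℂ) - MvPolynomial.C c) := by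
  set φ : MvPolynomial (Fin 3) ℂ ≃ₐ[ℂ] Polynomial (MvPolynomial (Fin 2) ℂ) :=
    (renameEquiv ℂ (Equiv.swap (0 : Fin 3) 2)).trans (finSuccEquiv ℂ 2) with hφ
  rw [← MulEquiv.prime_iff φ.toMulEquiv]
  show Prime (φ _)
  have e0 : φ (X 0) = Polynomial.C (X 1) := by
    have hs : Equiv.swap (0 : Fin 3) 2 0 = 2 := Equiv.swap_apply_left _ _
    have h2 : (2 : Fin 3) = Fin.succ 1 := rfl
    rw [hφ]
    simp only [AlgEquiv.trans_apply, renameEquiv_apply, rename_X]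
    rw [hs, h2, finSuccEquiv_X_succ]
  have e1 : φ (X 1) = Polynomial.C (X 0) := by
    have hs : Equiv.swap (0 : Fin 3) 2 1 = 1 := by decide
    have h2 : (1 : Fin 3) = Fin.succ 0 := rfl
    rw [hφ]
    simp only [AlgEquiv.trans_apply, renameEquiv_apply, rename_X]
    rw [hs, h2, finSuccEquiv_X_succ]
  have e2 : φ (X 2) = Polynomial.X := by
    have hs : Equiv.swap (0 : Fin 3) 2 2 = 0 := Equiv.swap_apply_right _ _
    rw [hφ]
    simp only [AlgEquiv.trans_apply, renameEquiv_apply, rename_X]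
    rw [hs, finSuccEquiv_X_zero]
  have ec : φ (MvPolynomial.C c) = Polynomial.C (MvPolynomial.C c) := by
    have : (MvPolynomial.C c : MvPolynomial (Fin 3) ℂ) = algebraMap ℂ _ c := rfl
    rw [this, AlgEquiv.commutes]
    rfl
  have himg : φ ((X 0 ^ n * X 2 - X 1 ^ 2 - X 1 : MvPolynomial (Fin 3) ℂ) - MvPolynomial.C c)
      = Polynomial.C (X 1 ^ n) * Polynomial.X
        - Polynomial.C ((X 0 : MvPolynomial (Fin 2) ℂ) ^ 2 + X 0 + MvPolynomial.C c) := by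
    rw [map_sub, map_sub, map_sub, map_mul, map_pow, map_pow, e0, e1, e2, ec,
      ← Polynomial.C_pow, ← Polynomial.C_pow, map_add, map_add]
    ring
  rw [himg]
  have hirr : Irreducible (Polynomial.C ((X 1 : MvPolynomial (Fin 2) ℂ) ^ n) * Polynomial.X
      - Polynomial.C ((X 0 : MvPolynomial (Fin 2) ℂ) ^ 2 + X 0 + MvPolynomial.C c)) := by
    apply linear_irred (pow_ne_zero _ (X_ne_zero 1))
    intro d hdA hdB
    by_contra hdu
    obtain ⟨i, hi, hass⟩ := (dvd_prime_pow prime_X1 n).mp hdA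
    cases i with
    | zero =>
      rw [pow_zero] at hass
      exact hdu (associated_one_iff_isUnit.mp hass)
    | succ k =>
      have hX1d : (X 1 : MvPolynomial (Fin 2) ℂ) ∣ d :=
        dvd_trans (dvd_pow_self _ (Nat.succ_ne_zero k)) hass.symm.dvd
      obtain ⟨t, ht⟩ := hX1d.trans hdB
      have h2 := congrArg (aeval (fun i : Fin 2 =>
        if i = 0 then (Polynomial.X : Polynomial ℂ) else 0)) ht
      simp only [map_add, map_mul, map_pow, aeval_X, MvPolynomial.aeval_C,
        if_pos rfl, if_neg (by decide : (1 : Fin 2) ≠ 0), zero_mul] at h2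
      have h3 := congrArg (fun p => Polynomial.coeff p 2) h2
      simp [Polynomial.coeff_X, Polynomial.coeff_C] at h3
  exact (UniqueFactorizationMonoid.irreducible_iff_prime.mp hirr)


private lemma aux_induct (F : MvPolynomial (Fin 3) ℂ)
    (hF : ∀ c : ℂ, Prime (F - MvPolynomial.C c)) (s : Multiset ℂ) :
    ∀ (a : ℂ), a ≠ 0 → ∀ g h : MvPolynomial (Fin 3) ℂ,
      g * h = MvPolynomial.C a * (s.map fun r => F - MvPolynomial.C r).prod →
      g ∈ Algebra.adjoin ℂ {F} ∧ h ∈ Algebra.adjoin ℂ {F} := by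
  have hCmem : ∀ b : ℂ, (MvPolynomial.C b : MvPolynomial (Fin 3) ℂ) ∈ Algebra.adjoin ℂ {F} :=
    fun b => Subalgebra.algebraMap_mem _ b
  induction s using Multiset.induction_on with
  | empty =>
    intro a ha g h hgh
    simp only [Multiset.map_zero, Multiset.prod_zero, mul_one] at hgh
    have hu : IsUnit (g * h) := hgh ▸ (Ne.isUnit ha).map (MvPolynomial.C : ℂ →+* _)
    obtain ⟨b, rfl⟩ := mv_isUnit_eq_C 3 g (isUnit_of_mul_isUnit_left hu)
    obtain ⟨b', rfl⟩ := mv_isUnit_eq_C 3 h (isUnit_of_mul_isUnit_right hu)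
    exact ⟨hCmem b, hCmem b'⟩
  | cons r t ih =>
    intro a ha g h hgh
    rw [Multiset.map_cons, Multiset.prod_cons] at hgh
    have hp := hF r
    have hdvd : (F - MvPolynomial.C r) ∣ g * h :=
      ⟨MvPolynomial.C a * (t.map fun r => F - MvPolynomial.C r).prod, by rw [hgh]; ring⟩
    have hmem : F - MvPolynomial.C r ∈ Algebra.adjoin ℂ {F} :=
      sub_mem (Algebra.self_mem_adjoin_singleton ℂ F) (hCmem r)
    rcases hp.2.2 g h hdvd with hd | hd
    · obtain ⟨g', rfl⟩ := hd
      have hcan : g' * h = MvPolynomial.C a * (t.map fun r => F - MvPolynomial.C r).prod :=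
        mul_left_cancel₀ hp.ne_zero (by linear_combination hgh)
      obtain ⟨h1, h2⟩ := ih a ha g' h hcan
      exact ⟨mul_mem hmem h1, h2⟩
    · obtain ⟨h', rfl⟩ := hd
      have hcan : g * h' = MvPolynomial.C a * (t.map fun r => F - MvPolynomial.C r).prod :=
        mul_left_cancel₀ hp.ne_zero (by linear_combination hgh)
      obtain ⟨h1, h2⟩ := ih a ha g h' hcan
      exact ⟨h1, mul_mem hmem h2⟩

theorem danielewski_factoriallyClosed (n : ℕ) (hn : 2 ≤ n) :
    ∀ g h : MvPolynomial (Fin 3) ℂ, g ≠ 0 → h ≠ 0 →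
      g * h ∈ Algebra.adjoin ℂ {(X 0 ^ n * X 2 - X 1 ^ 2 - X 1 : MvPolynomial (Fin 3) ℂ)} →
        g ∈ Algebra.adjoin ℂ {(X 0 ^ n * X 2 - X 1 ^ 2 - X 1 : MvPolynomial (Fin 3) ℂ)} ∧
        h ∈ Algebra.adjoin ℂ {(X 0 ^ n * X 2 - X 1 ^ 2 - X 1 : MvPolynomial (Fin 3) ℂ)} := by
  intro g h hg hh hgh
  set f : MvPolynomial (Fin 3) ℂ := X 0 ^ n * X 2 - X 1 ^ 2 - X 1 with hf
  rw [Algebra.adjoin_singleton_eq_range_aeval] at hgh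
  obtain ⟨q, hq⟩ := hgh
  have hq0 : q ≠ 0 := by
    rintro rfl
    rw [map_zero] at hq
    exact (mul_ne_zero hg hh) hq.symm
  have hsplit := (Polynomial.C_leadingCoeff_mul_prod_multiset_X_sub_C (IsAlgClosed.card_roots_eq_natDegree (p := q))).symm
  have key : g * h = MvPolynomial.C q.leadingCoeff
      * (q.roots.map fun r => f - MvPolynomial.C r).prod := by
    conv_lhs => rw [← hq, hsplit]
    rw [map_mul, map_multiset_prod, Multiset.map_map]
    congr 1
    · show (Polynomial.aeval f) (Polynomial.C q.leadingCoeff) = _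
      rw [Polynomial.aeval_C, MvPolynomial.algebraMap_eq]
    · congr 1
      refine Multiset.map_congr rfl fun r _ => ?_
      show (Polynomial.aeval f) (Polynomial.X - Polynomial.C r) = _
      rw [map_sub, Polynomial.aeval_X, Polynomial.aeval_C, MvPolynomial.algebraMap_eq]
  exact aux_induct f (fc_prime n) q.roots q.leadingCoeff
    (Polynomial.leadingCoeff_ne_zero.mpr hq0) g h key
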